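/- arXiv:1510.07623 — 3 statements merged into one kernel-verified Lean document; each statement's English description precedes it below -/
import Mathlib

section
/- If p₁ ≤ 1/n (all key probabilities are at most 1/n), then for any λ > 0 and any B ⊆ [n], Pr[ μ₁(B) ≥ (|B|/n)·(eλ) ] ≤ λ^{-λ·|B|}. -/
open Finset

lemma aux_mul_log (lam : ℝ) (h1 : 1 ≤ lam) : lam - 1 ≤ lam * Real.log lam := by
  have h0 : 0 < lam := lt_of_lt_of_le one_pos h1
  have := Real.add_one_le_exp (-Real.log lam)
  rw [Real.exp_neg, Real.exp_log h0] at this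
  have h4 := mul_le_mul_of_nonneg_left this h0.le
  have h5 : lam * lam⁻¹ = 1 := mul_inv_cancel₀ (ne_of_gt h0)
  nlinarith

lemma aux_convex (θ c : ℝ) (h0 : 0 ≤ θ) (h1 : θ ≤ 1) :
    Real.exp (θ * c) ≤ 1 - θ + θ * Real.exp c := by
  have := convexOn_exp.2 (Set.mem_univ (0:ℝ)) (Set.mem_univ c)
    (by linarith : (0:ℝ) ≤ 1 - θ) h0 (by ring)
  simpa [smul_eq_mul] using this

open Classical in
/-- If all key probabilities are at most `1/n`, then for any `λ > 0` and any `B ⊆ [n]`,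
`Pr[ μ₁(B) ≥ (|B|/n)·(e·λ) ] ≤ (1/λ^λ)^{|B|}`. -/
theorem stmt1 {K : Type*} [Fintype K] [DecidableEq K] (n : ℕ) (hn : 1 ≤ n)
    (p : K → ℝ) (hp : ∀ i, 0 ≤ p i) (hsum : ∑ i, p i = 1)
    (hmax : ∀ i, p i ≤ 1 / n)
    (B : Finset (Fin n)) (lam : ℝ) (hlam : 0 < lam) :
    ((univ.filter (fun h : K → Fin n =>
        (B.card : ℝ) / n * (Real.exp 1 * lam) ≤
          ∑ i ∈ univ.filter (fun i => h i ∈ B), p i)).card : ℝ) /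
      (Fintype.card (K → Fin n) : ℝ) ≤ (1 / lam ^ (lam : ℝ)) ^ B.card := by
  have hn0 : (0:ℝ) < n := by exact_mod_cast hn
  have hNpos : (0:ℝ) < (Fintype.card (K → Fin n) : ℝ) := by
    have hnn : 0 < n := hn
    have : 0 < Fintype.card (K → Fin n) := by
      rw [Fintype.card_fun, Fintype.card_fin]; positivity
    exact_mod_cast this
  have hLHS1 : ((univ.filter (fun h : K → Fin n =>
        (B.card : ℝ) / n * (Real.exp 1 * lam) ≤
          ∑ i ∈ univ.filter (fun i => h i ∈ B), p i)).card : ℝ) /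
      (Fintype.card (K → Fin n) : ℝ) ≤ 1 := by
    rw [div_le_one hNpos]
    exact_mod_cast Finset.card_filter_le _ _
  rcases le_or_gt lam 1 with hle | hgt
  · refine hLHS1.trans ?_
    have h1 : lam ^ (lam : ℝ) ≤ 1 := Real.rpow_le_one hlam.le hle hlam.le
    have h2 : (0:ℝ) < lam ^ (lam : ℝ) := Real.rpow_pos_of_pos hlam _
    exact one_le_pow₀ (one_le_one_div h2 h1)
  · set b : ℕ := B.card with hb
    have hbn : (b : ℝ) ≤ n := by
      exact_mod_cast (Finset.card_le_card (Finset.subset_univ B)).trans_eq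
        (Finset.card_univ.trans (Fintype.card_fin n))
    have hb0 : (0:ℝ) ≤ b := Nat.cast_nonneg _
    set s : ℝ := n * Real.log lam with hs
    have hlog : 0 < Real.log lam := Real.log_pos hgt
    have hs0 : 0 ≤ s := by positivity
    set a : ℝ := (b : ℝ) / n * (Real.exp 1 * lam) with ha
    set S := univ.filter (fun h : K → Fin n =>
        a ≤ ∑ i ∈ univ.filter (fun i => h i ∈ B), p i) with hS
    -- Markov step
    have markov : (S.card : ℝ) * Real.exp (s * a) ≤
        ∑ h : K → Fin n, Real.exp (s * ∑ i ∈ univ.filter (fun i => h i ∈ B), p i) := by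
      have h1 : ∑ h ∈ S, Real.exp (s * a) ≤
          ∑ h ∈ S, Real.exp (s * ∑ i ∈ univ.filter (fun i => h i ∈ B), p i) := by
        refine Finset.sum_le_sum fun h hh => ?_
        have := (Finset.mem_filter.mp hh).2
        exact Real.exp_le_exp.mpr (mul_le_mul_of_nonneg_left this hs0)
      have h2 : ∑ h ∈ S, Real.exp (s * ∑ i ∈ univ.filter (fun i => h i ∈ B), p i) ≤
          ∑ h : K → Fin n, Real.exp (s * ∑ i ∈ univ.filter (fun i => h i ∈ B), p i) :=
        Finset.sum_le_sum_of_subset_of_nonneg (Finset.subset_univ S)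
          (fun _ _ _ => (Real.exp_pos _).le)
      calc (S.card : ℝ) * Real.exp (s * a) = ∑ _h ∈ S, Real.exp (s * a) := by
            rw [Finset.sum_const, nsmul_eq_mul]
        _ ≤ _ := h1.trans h2
    -- factorization into product over keys
    have factor : ∑ h : K → Fin n, Real.exp (s * ∑ i ∈ univ.filter (fun i => h i ∈ B), p i)
        = ∏ i : K, ((n : ℝ) + b * (Real.exp (s * p i) - 1)) := by
      have step1 : ∀ h : K → Fin n,
          Real.exp (s * ∑ i ∈ univ.filter (fun i => h i ∈ B), p i)
          = ∏ i : K, Real.exp (s * if h i ∈ B then p i else 0) := by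
        intro h
        rw [← Real.exp_sum, ← Finset.mul_sum, Finset.sum_filter]
      simp_rw [step1]
      rw [← Fintype.prod_sum (fun (i : K) (v : Fin n) => Real.exp (s * if v ∈ B then p i else 0))]
      refine Finset.prod_congr rfl fun i _ => ?_
      have he : ∀ v : Fin n, Real.exp (s * if v ∈ B then p i else 0)
          = 1 + (if v ∈ B then Real.exp (s * p i) - 1 else 0) := by
        intro v; split <;> simp
      simp_rw [he]
      rw [Finset.sum_add_distrib, Finset.sum_const, ← Finset.sum_filter]
      have hf : univ.filter (fun v : Fin n => v ∈ B) = B := by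
        ext v; simp
      rw [hf, Finset.sum_const]
      simp [mul_comm, hb]
    -- bound each factor
    have hfac_le : ∏ i : K, ((n : ℝ) + b * (Real.exp (s * p i) - 1))
        ≤ (Fintype.card (K → Fin n) : ℝ) * Real.exp ((b : ℝ) * (lam - 1)) := by
      have hconv : ∀ i : K, Real.exp (s * p i) - 1 ≤ (n : ℝ) * p i * (lam - 1) := by
        intro i
        have hθ0 : 0 ≤ (n : ℝ) * p i := mul_nonneg hn0.le (hp i)
        have hθ1 : (n : ℝ) * p i ≤ 1 := by
          have := hmax i
          rw [le_div_iff₀ hn0] at this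
          linarith [this]
        have := aux_convex ((n : ℝ) * p i) (Real.log lam) hθ0 hθ1
        rw [Real.exp_log hlam] at this
        have harg : s * p i = ((n : ℝ) * p i) * Real.log lam := by rw [hs]; ring
        rw [harg]
        nlinarith
      have hstep : ∀ i : K, (n : ℝ) + b * (Real.exp (s * p i) - 1)
          ≤ (n : ℝ) * Real.exp ((b : ℝ) / n * (Real.exp (s * p i) - 1)) := by
        intro i
        have h1 := Real.add_one_le_exp ((b : ℝ) / n * (Real.exp (s * p i) - 1))
        have : (n : ℝ) * ((b : ℝ) / n * (Real.exp (s * p i) - 1) + 1)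
            ≤ (n : ℝ) * Real.exp ((b : ℝ) / n * (Real.exp (s * p i) - 1)) :=
          mul_le_mul_of_nonneg_left h1 hn0.le
        calc (n : ℝ) + b * (Real.exp (s * p i) - 1)
            = (n : ℝ) * ((b : ℝ) / n * (Real.exp (s * p i) - 1) + 1) := by
              field_simp; ring
          _ ≤ _ := this
      have hnonneg : ∀ i ∈ (univ : Finset K), 0 ≤ (n : ℝ) + b * (Real.exp (s * p i) - 1) := by
        intro i _
        have : (1:ℝ) ≤ Real.exp (s * p i) := by
          rw [← Real.exp_zero]
          exact Real.exp_le_exp.mpr (mul_nonneg hs0 (hp i))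
        nlinarith
      calc ∏ i : K, ((n : ℝ) + b * (Real.exp (s * p i) - 1))
          ≤ ∏ i : K, (n : ℝ) * Real.exp ((b : ℝ) / n * (Real.exp (s * p i) - 1)) :=
            Finset.prod_le_prod hnonneg (fun i _ => hstep i)
        _ = (n : ℝ) ^ Fintype.card K *
            Real.exp (∑ i : K, (b : ℝ) / n * (Real.exp (s * p i) - 1)) := by
            rw [Finset.prod_mul_distrib, Finset.prod_const, Real.exp_sum, Finset.card_univ]
        _ ≤ (n : ℝ) ^ Fintype.card K * Real.exp ((b : ℝ) * (lam - 1)) := by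
            refine mul_le_mul_of_nonneg_left (Real.exp_le_exp.mpr ?_) (by positivity)
            have hsum' : ∑ i : K, (b : ℝ) / n * (Real.exp (s * p i) - 1)
                ≤ ∑ i : K, (b : ℝ) / n * ((n : ℝ) * p i * (lam - 1)) := by
              refine Finset.sum_le_sum fun i _ => ?_
              exact mul_le_mul_of_nonneg_left (hconv i) (by positivity)
            refine hsum'.trans ?_
            have : ∑ i : K, (b : ℝ) / n * ((n : ℝ) * p i * (lam - 1))
                = (b : ℝ) * (lam - 1) * ∑ i : K, p i := by
              rw [Finset.mul_sum]
              refine Finset.sum_congr rfl fun i _ => ?_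
              field_simp
            rw [this, hsum, mul_one]
        _ = (Fintype.card (K → Fin n) : ℝ) * Real.exp ((b : ℝ) * (lam - 1)) := by
            congr 1
            rw [Fintype.card_fun, Fintype.card_fin]
            push_cast
            ring
    -- combine
    have key : (S.card : ℝ) * Real.exp (s * a) ≤
        (Fintype.card (K → Fin n) : ℝ) * Real.exp ((b : ℝ) * (lam - 1)) := by
      rw [← factor] at hfac_le
      exact markov.trans hfac_le
    have hsa : s * a = (b : ℝ) * (Real.exp 1 * lam * Real.log lam) := by
      rw [hs, ha]
      field_simp
    have hdiv : (S.card : ℝ) / (Fintype.card (K → Fin n) : ℝ)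
        ≤ Real.exp ((b : ℝ) * (lam - 1) - s * a) := by
      rw [div_le_iff₀ hNpos, Real.exp_sub, div_mul_eq_mul_div, le_div_iff₀ (Real.exp_pos _)]
      calc (S.card : ℝ) * Real.exp (s * a)
          ≤ (Fintype.card (K → Fin n) : ℝ) * Real.exp ((b : ℝ) * (lam - 1)) := key
        _ = Real.exp ((b : ℝ) * (lam - 1)) * (Fintype.card (K → Fin n) : ℝ) := by ring
    have hRHS : (1 / lam ^ (lam : ℝ)) ^ b = Real.exp ((b : ℝ) * (-(lam * Real.log lam))) := by
      rw [Real.rpow_def_of_pos hlam, one_div, ← Real.exp_neg, ← Real.exp_nat_mul]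
      ring_nf
    have hfinal : (b : ℝ) * (lam - 1) - s * a ≤ (b : ℝ) * (-(lam * Real.log lam)) := by
      rw [hsa]
      have h1 : lam - 1 ≤ lam * Real.log lam := aux_mul_log lam hgt.le
      have h2 : (2:ℝ) ≤ Real.exp 1 := by
        have := Real.add_one_le_exp (1:ℝ); linarith
      have h3 : 0 ≤ lam * Real.log lam := by positivity
      nlinarith [mul_le_mul_of_nonneg_left h1 hb0,
        mul_nonneg (mul_nonneg (by linarith : (0:ℝ) ≤ Real.exp 1 - 2) hb0) h3]
    calc (S.card : ℝ) / (Fintype.card (K → Fin n) : ℝ)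
        ≤ Real.exp ((b : ℝ) * (lam - 1) - s * a) := hdiv
      _ ≤ Real.exp ((b : ℝ) * (-(lam * Real.log lam))) := Real.exp_le_exp.mpr hfinal
      _ = (1 / lam ^ (lam : ℝ)) ^ b := hRHS.symm
end

section
/- If p₁ ≤ 1/(5n) and d ≥ 2, then for every B ⊆ [n] with |B| = k, Pr[ μ_d(B) ≥ k/n ] ≤ (e·k/n)^{5k}. -/
open Finset

lemma exp_convex_bound (t q M : ℝ) (hq : 0 ≤ q) (hqM : q ≤ M) (hM : 0 < M) :
    Real.exp (t * q) ≤ 1 + (q / M) * (Real.exp (t * M) - 1) := by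
  have hθ0 : 0 ≤ q / M := div_nonneg hq hM.le
  have hθ1 : q / M ≤ 1 := (div_le_one hM).2 hqM
  have h := convexOn_exp.2 (Set.mem_univ (0:ℝ)) (Set.mem_univ (t * M))
      (by linarith : (0:ℝ) ≤ 1 - q / M) hθ0 (by ring)
  simp only [smul_eq_mul, mul_zero, zero_add, Real.exp_zero, mul_one] at h
  have hx : q / M * (t * M) = t * q := by field_simp
  rw [hx] at h
  linarith

open Classical in
/-- If `p₁ ≤ 1/(5n)` and `d ≥ 2`, then for every `B ⊆ [n]` with `|B| = k`,
`Pr[ μ_d(B) ≥ k/n ] ≤ (e·k/n)^{5k}`. -/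
theorem stmt3 {K : Type*} [Fintype K] [DecidableEq K] (n d : ℕ) (hn : 1 ≤ n) (hd : 2 ≤ d)
    (p : K → ℝ) (hp : ∀ i, 0 ≤ p i) (hsum : ∑ i, p i = 1)
    (hmax : ∀ i, p i ≤ 1 / (5 * n))
    (B : Finset (Fin n)) (k : ℕ) (hk : B.card = k) :
    ((univ.filter (fun h : Fin d → K → Fin n =>
        (k : ℝ) / n ≤ ∑ i ∈ univ.filter (fun i => ∀ r, h r i ∈ B), p i)).card : ℝ) /
      (Fintype.card (Fin d → K → Fin n) : ℝ) ≤ (Real.exp 1 * k / n) ^ (5 * k) := by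
  have hn' : (0:ℝ) < n := by exact_mod_cast hn
  have hNe : Nonempty (Fin n) := ⟨⟨0, hn⟩⟩
  have hNnat : 0 < Fintype.card (Fin d → K → Fin n) := Fintype.card_pos
  have hN : (0:ℝ) < (Fintype.card (Fin d → K → Fin n) : ℝ) := by exact_mod_cast hNnat
  rcases Nat.eq_zero_or_pos k with hk0 | hkpos
  · subst hk0
    rw [mul_zero, pow_zero, div_le_one hN]
    calc ((univ.filter _).card : ℝ) ≤ ((univ : Finset (Fin d → K → Fin n)).card : ℝ) := by
          exact_mod_cast Finset.card_filter_le _ _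
      _ = _ := by rw [Finset.card_univ]
  -- main case
  have hkR : (0:ℝ) < k := by exact_mod_cast hkpos
  have hkn : k ≤ n := by
    have h1 := Finset.card_le_card (Finset.subset_univ B)
    rw [hk, Finset.card_univ, Fintype.card_fin] at h1
    exact h1
  have hknR : (k:ℝ) ≤ n := by exact_mod_cast hkn
  set t : ℝ := 5 * n * Real.log (n / k) with ht
  have hnk1 : (1:ℝ) ≤ (n:ℝ) / k := (one_le_div hkR).2 hknR
  have hlog0 : 0 ≤ Real.log ((n:ℝ) / k) := Real.log_nonneg hnk1
  have ht0 : 0 ≤ t := by positivity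
  set E := univ.filter (fun h : Fin d → K → Fin n =>
      (k : ℝ) / n ≤ ∑ i ∈ univ.filter (fun i => ∀ r, h r i ∈ B), p i) with hE
  -- Markov step
  have markov : (E.card : ℝ) * Real.exp (t * ((k:ℝ)/n)) ≤
      ∑ h : Fin d → K → Fin n,
        Real.exp (t * ∑ i ∈ univ.filter (fun i => ∀ r, h r i ∈ B), p i) := by
    calc (E.card : ℝ) * Real.exp (t * ((k:ℝ)/n))
        = ∑ _h ∈ E, Real.exp (t * ((k:ℝ)/n)) := by
          rw [Finset.sum_const, nsmul_eq_mul]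
      _ ≤ ∑ h ∈ E, Real.exp (t * ∑ i ∈ univ.filter (fun i => ∀ r, h r i ∈ B), p i) := by
          refine Finset.sum_le_sum (fun h hh => ?_)
          have hμ := (Finset.mem_filter.1 hh).2
          exact Real.exp_le_exp.2 (mul_le_mul_of_nonneg_left hμ ht0)
      _ ≤ _ := Finset.sum_le_sum_of_subset_of_nonneg (Finset.subset_univ E)
          (fun _ _ _ => (Real.exp_pos _).le)
  -- rewrite each term as a product over keys
  have hswap : ∀ h : Fin d → K → Fin n,
      Real.exp (t * ∑ i ∈ univ.filter (fun i => ∀ r, h r i ∈ B), p i)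
        = ∏ i : K, Real.exp (t * (p i * if (∀ r, h r i ∈ B) then 1 else 0)) := by
    intro h
    rw [Finset.sum_filter, Finset.mul_sum, Real.exp_sum]
    refine Finset.prod_congr rfl (fun i _ => ?_)
    congr 1
    split <;> ring
  -- factor the sum over the product space
  have hfactor : ∑ h : Fin d → K → Fin n,
        ∏ i : K, Real.exp (t * (p i * if (∀ r, h r i ∈ B) then 1 else 0))
      = ∏ i : K, ∑ v : Fin d → Fin n,
        Real.exp (t * (p i * if (∀ r, v r ∈ B) then 1 else 0)) := by
    rw [Finset.prod_univ_sum, Fintype.piFinset_univ]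
    refine Fintype.sum_bijective (Function.swap) ?_ _ _ (fun h => rfl)
    exact ⟨fun a b hab => by
        funext i r; exact congrFun (congrFun hab r) i,
      fun x => ⟨Function.swap x, rfl⟩⟩
  -- single coordinate expectation
  have hfiltercard : (univ.filter (fun v : Fin d → Fin n => ∀ r, v r ∈ B)).card = k ^ d := by
    have heq : univ.filter (fun v : Fin d → Fin n => ∀ r, v r ∈ B)
        = Fintype.piFinset (fun _ : Fin d => B) := by
      ext v; simp [Fintype.mem_piFinset]
    rw [heq, Fintype.card_piFinset]
    simp [hk]
  have hsingle : ∀ i : K, ∑ v : Fin d → Fin n,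
        Real.exp (t * (p i * if (∀ r, v r ∈ B) then 1 else 0))
      = (n:ℝ)^d + (k:ℝ)^d * (Real.exp (t * p i) - 1) := by
    intro i
    calc ∑ v : Fin d → Fin n, Real.exp (t * (p i * if (∀ r, v r ∈ B) then 1 else 0))
        = ∑ v : Fin d → Fin n, (1 + (if (∀ r, v r ∈ B) then Real.exp (t * p i) - 1 else 0)) := by
          refine Finset.sum_congr rfl (fun v _ => ?_)
          split <;> simp
      _ = (n:ℝ)^d + (k:ℝ)^d * (Real.exp (t * p i) - 1) := by
          rw [Finset.sum_add_distrib, Finset.sum_const, Finset.card_univ, Fintype.card_fun,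
            Fintype.card_fin, Fintype.card_fin, ← Finset.sum_filter, Finset.sum_const, hfiltercard]
          simp only [nsmul_eq_mul]
          push_cast
          ring
  -- convexity bound per key
  have hq1 : ((k:ℝ)/n) ≤ 1 := (div_le_one hn').2 hknR
  have hq0 : (0:ℝ) ≤ (k:ℝ)/n := by positivity
  have hMpos : (0:ℝ) < 1 / (5 * (n:ℝ)) := by positivity
  have hexpM : Real.exp (t * (1 / (5 * (n:ℝ)))) = (n:ℝ)/k := by
    rw [ht]
    have heq : 5 * (n:ℝ) * Real.log ((n:ℝ)/k) * (1/(5*(n:ℝ))) = Real.log ((n:ℝ)/k) := by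
      field_simp
    rw [heq, Real.exp_log (by positivity)]
  have hterm_bound : ∀ i : K, Real.exp (t * p i) - 1 ≤ 5 * (n:ℝ) * p i * ((n:ℝ)/k - 1) := by
    intro i
    have h1 := exp_convex_bound t (p i) (1/(5*(n:ℝ))) (hp i) (hmax i) hMpos
    rw [hexpM] at h1
    have h2 : p i / (1/(5*(n:ℝ))) = 5 * (n:ℝ) * p i := by field_simp
    rw [h2] at h1
    linarith
  have hsum_nonneg : ∀ i : K, (0:ℝ) ≤ Real.exp (t * p i) - 1 := by
    intro i
    have h1 : (0:ℝ) ≤ t * p i := mul_nonneg ht0 (hp i)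
    have h2 := Real.one_le_exp h1
    linarith
  have hsum_bound : ∑ i : K, (Real.exp (t * p i) - 1) ≤ 5 * (n:ℝ) * ((n:ℝ)/k - 1) := by
    calc ∑ i : K, (Real.exp (t * p i) - 1)
        ≤ ∑ i : K, 5 * (n:ℝ) * p i * ((n:ℝ)/k - 1) :=
          Finset.sum_le_sum (fun i _ => hterm_bound i)
      _ = ∑ i : K, (5 * (n:ℝ) * ((n:ℝ)/k - 1)) * p i := by
          refine Finset.sum_congr rfl (fun i _ => by ring)
      _ = (5 * (n:ℝ) * ((n:ℝ)/k - 1)) * ∑ i : K, p i := by rw [← Finset.mul_sum]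
      _ = 5 * (n:ℝ) * ((n:ℝ)/k - 1) := by rw [hsum, mul_one]
  have hexp_sum : ((k:ℝ)/n)^d * ∑ i : K, (Real.exp (t * p i) - 1) ≤ 5 * (k:ℝ) := by
    have hA : ((k:ℝ)/n)^d ≤ ((k:ℝ)/n)^2 := pow_le_pow_of_le_one hq0 hq1 hd
    have hB : (0:ℝ) ≤ ∑ i : K, (Real.exp (t * p i) - 1) :=
      Finset.sum_nonneg (fun i _ => hsum_nonneg i)
    have hC : (0:ℝ) ≤ 5 * (n:ℝ) * ((n:ℝ)/k - 1) := by
      have : (0:ℝ) ≤ (n:ℝ)/k - 1 := by linarith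
      have h5 : (0:ℝ) ≤ 5 * (n:ℝ) := by positivity
      exact mul_nonneg h5 this
    calc ((k:ℝ)/n)^d * ∑ i : K, (Real.exp (t * p i) - 1)
        ≤ ((k:ℝ)/n)^2 * (5 * (n:ℝ) * ((n:ℝ)/k - 1)) :=
          mul_le_mul hA hsum_bound hB (by positivity)
      _ = 5 * (k:ℝ) * (((n:ℝ) - k)/n) := by field_simp
      _ ≤ 5 * (k:ℝ) * 1 := by
          refine mul_le_mul_of_nonneg_left ?_ (by positivity)
          rw [div_le_one hn']; linarith
      _ = 5 * (k:ℝ) := by ring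
  -- product bound
  have hprod_bound : ∏ i : K, ((n:ℝ)^d + (k:ℝ)^d * (Real.exp (t * p i) - 1))
      ≤ (Fintype.card (Fin d → K → Fin n) : ℝ) * Real.exp (5 * (k:ℝ)) := by
    have hstep : ∀ i : K, (n:ℝ)^d + (k:ℝ)^d * (Real.exp (t * p i) - 1)
        ≤ (n:ℝ)^d * Real.exp (((k:ℝ)/n)^d * (Real.exp (t * p i) - 1)) := by
      intro i
      have hkd : (k:ℝ)^d = (n:ℝ)^d * ((k:ℝ)/n)^d := by
        rw [div_pow]; field_simp
      rw [hkd]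
      have h1 := Real.add_one_le_exp (((k:ℝ)/n)^d * (Real.exp (t * p i) - 1))
      calc (n:ℝ)^d + (n:ℝ)^d * ((k:ℝ)/n)^d * (Real.exp (t * p i) - 1)
          = (n:ℝ)^d * (((k:ℝ)/n)^d * (Real.exp (t * p i) - 1) + 1) := by ring
        _ ≤ (n:ℝ)^d * Real.exp (((k:ℝ)/n)^d * (Real.exp (t * p i) - 1)) :=
            mul_le_mul_of_nonneg_left h1 (by positivity)
    calc ∏ i : K, ((n:ℝ)^d + (k:ℝ)^d * (Real.exp (t * p i) - 1))
        ≤ ∏ i : K, ((n:ℝ)^d * Real.exp (((k:ℝ)/n)^d * (Real.exp (t * p i) - 1))) := by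
          refine Finset.prod_le_prod (fun i _ => ?_) (fun i _ => hstep i)
          have := hsum_nonneg i
          positivity
      _ = ((n:ℝ)^d)^(Fintype.card K) *
            Real.exp (∑ i : K, ((k:ℝ)/n)^d * (Real.exp (t * p i) - 1)) := by
          rw [Finset.prod_mul_distrib, Finset.prod_const, Finset.card_univ, ← Real.exp_sum]
      _ ≤ ((n:ℝ)^d)^(Fintype.card K) * Real.exp (5 * (k:ℝ)) := by
          refine mul_le_mul_of_nonneg_left ?_ (by positivity)
          refine Real.exp_le_exp.2 ?_
          rw [← Finset.mul_sum]
          exact hexp_sum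
      _ = (Fintype.card (Fin d → K → Fin n) : ℝ) * Real.exp (5 * (k:ℝ)) := by
          congr 1
          rw [Fintype.card_fun, Fintype.card_fun, Fintype.card_fin, Fintype.card_fin]
          push_cast
          rw [← pow_mul, ← pow_mul, mul_comm]
  have main : (E.card : ℝ) * Real.exp (t * ((k:ℝ)/n)) ≤
      (Fintype.card (Fin d → K → Fin n) : ℝ) * Real.exp (5 * (k:ℝ)) := by
    calc (E.card : ℝ) * Real.exp (t * ((k:ℝ)/n))
        ≤ ∑ h : Fin d → K → Fin n,
            Real.exp (t * ∑ i ∈ univ.filter (fun i => ∀ r, h r i ∈ B), p i) := markov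
      _ = ∑ h : Fin d → K → Fin n,
            ∏ i : K, Real.exp (t * (p i * if (∀ r, h r i ∈ B) then 1 else 0)) :=
          Finset.sum_congr rfl (fun h _ => hswap h)
      _ = ∏ i : K, ∑ v : Fin d → Fin n,
            Real.exp (t * (p i * if (∀ r, v r ∈ B) then 1 else 0)) := hfactor
      _ = ∏ i : K, ((n:ℝ)^d + (k:ℝ)^d * (Real.exp (t * p i) - 1)) :=
          Finset.prod_congr rfl (fun i _ => hsingle i)
      _ ≤ _ := hprod_bound
  have hfinal : Real.exp (5 * (k:ℝ)) / Real.exp (t * ((k:ℝ)/n)) =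
      (Real.exp 1 * k / n) ^ (5 * k) := by
    rw [← Real.exp_sub]
    have h1 : t * ((k:ℝ)/n) = 5 * (k:ℝ) * Real.log ((n:ℝ)/k) := by
      rw [ht]; field_simp
    have h2 : Real.log (Real.exp 1 * k / n) = 1 - Real.log ((n:ℝ)/k) := by
      rw [Real.log_div (by positivity) (ne_of_gt hn'),
        Real.log_mul (Real.exp_ne_zero 1) (ne_of_gt hkR), Real.log_exp,
        Real.log_div (ne_of_gt hn') (ne_of_gt hkR)]
      ring
    have h3 : (Real.exp 1 * k / n) ^ (5 * k) =
        Real.exp (((5 * k : ℕ) : ℝ) * Real.log (Real.exp 1 * k / n)) := by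
      rw [Real.exp_nat_mul, Real.exp_log (by positivity)]
    rw [h3, h2, h1]
    congr 1
    push_cast
    ring
  rw [div_le_iff₀ hN]
  calc (E.card : ℝ)
      ≤ (Fintype.card (Fin d → K → Fin n) : ℝ) * Real.exp (5 * (k:ℝ)) /
          Real.exp (t * ((k:ℝ)/n)) := (le_div_iff₀ (Real.exp_pos _)).2 main
    _ = (Real.exp 1 * k / n) ^ (5 * k) * (Fintype.card (Fin d → K → Fin n) : ℝ) := by
        rw [mul_div_assoc, hfinal]; ring
end

section
/- The sum Σ_{k=1}^{⌊n/5⌋} C(n,k)·(e·k/n)^{5k} is at most Σ_{k=1}^{⌊n/5⌋} (e^{3/2}·k/n)^{4k}, and this quantity is o(1/n) as n → ∞. -/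
open Finset Filter Asymptotics

lemma choose_bd (n k : ℕ) (hk : 1 ≤ k) :
    (n.choose k : ℝ) ≤ (Real.exp 1 * n / k) ^ k := by
  have hK : (0:ℝ) < k := by exact_mod_cast hk
  have hN : (0:ℝ) ≤ n := Nat.cast_nonneg n
  have hf : (0:ℝ) < (Nat.factorial k : ℝ) := by exact_mod_cast k.factorial_pos
  have h1 : (n.choose k : ℝ) ≤ (n:ℝ) ^ k / (Nat.factorial k : ℝ) := Nat.choose_le_pow_div k n
  have h2 : (k:ℝ) ^ k / (Nat.factorial k : ℝ) ≤ Real.exp k :=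
    Real.pow_div_factorial_le_exp (x := (k:ℝ)) hK.le k
  have h3 : (k:ℝ) ^ k ≤ Real.exp 1 ^ k * (Nat.factorial k : ℝ) := by
    have he : Real.exp (k : ℝ) = Real.exp 1 ^ k := by
      rw [← Real.exp_nat_mul]; norm_num
    rw [div_le_iff₀ hf] at h2
    calc (k:ℝ)^k ≤ Real.exp k * Nat.factorial k := h2
      _ = Real.exp 1 ^ k * Nat.factorial k := by rw [he]
  refine h1.trans ?_
  rw [div_pow, mul_pow, div_le_div_iff₀ hf (by positivity)]
  calc (n:ℝ)^k * (k:ℝ)^k ≤ (n:ℝ)^k * (Real.exp 1 ^ k * Nat.factorial k) := by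
        exact mul_le_mul_of_nonneg_left h3 (by positivity)
    _ = Real.exp 1 ^ k * (n:ℝ)^k * Nat.factorial k := by ring

lemma exp_threehalf_lt_five : Real.exp (3/2) < 5 := by
  have h1 : Real.exp 1 < 2.7182818286 := Real.exp_one_lt_d9
  have h0 : (0:ℝ) < Real.exp 1 := Real.exp_pos 1
  have h2 : Real.exp (3/2) ^ 2 = Real.exp 1 ^ 3 := by
    rw [← Real.exp_nat_mul, ← Real.exp_nat_mul]; norm_num
  have h3 : Real.exp 1 ^ 3 < 25 := by
    calc Real.exp 1 ^ 3 < 2.7182818286 ^ 3 := by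
          exact pow_lt_pow_left₀ h1 h0.le (by norm_num)
      _ < 25 := by norm_num
  nlinarith [Real.exp_pos (3/2 : ℝ)]

/-- The union-bound computation: `Σ_{k=1}^{⌊n/5⌋} C(n,k)·(e·k/n)^(5k)` is at most
`Σ_{k=1}^{⌊n/5⌋} (e^{3/2}·k/n)^(4k)`, which is `o(1/n)` as `n → ∞`. -/
theorem stmt4 :
    (∀ n : ℕ, 1 ≤ n →
      ∑ k ∈ Finset.Icc 1 (n / 5), (n.choose k : ℝ) * (Real.exp 1 * k / n) ^ (5 * k) ≤
        ∑ k ∈ Finset.Icc 1 (n / 5), (Real.exp (3 / 2) * k / n) ^ (4 * k)) ∧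
    (fun n : ℕ => ∑ k ∈ Finset.Icc 1 (n / 5), (Real.exp (3 / 2) * k / n) ^ (4 * k))
      =o[atTop] (fun n : ℕ => 1 / (n : ℝ)) := by
  set c : ℝ := Real.exp (3/2) with hc
  have hcpos : 0 < c := Real.exp_pos _
  constructor
  · -- termwise bound
    intro n hn
    refine Finset.sum_le_sum fun k hk => ?_
    obtain ⟨hk1, hk2⟩ := Finset.mem_Icc.mp hk
    have hK : (0:ℝ) < k := by exact_mod_cast hk1
    have hN : (0:ℝ) < n := by exact_mod_cast hn
    have key : (Real.exp 1 * n / k) ^ k * (Real.exp 1 * k / n) ^ (5 * k) =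
        (c * k / n) ^ (4 * k) := by
      have he : c ^ (4 * k) = Real.exp 1 ^ (6 * k) := by
        rw [hc, ← Real.exp_nat_mul, ← Real.exp_nat_mul]; congr 1; push_cast; ring
      rw [div_pow, div_pow, div_pow, mul_pow, mul_pow, mul_pow, he]
      rw [div_mul_div_comm, div_eq_div_iff (by positivity) (by positivity)]
      ring
    calc (n.choose k : ℝ) * (Real.exp 1 * k / n) ^ (5 * k)
        ≤ (Real.exp 1 * n / k) ^ k * (Real.exp 1 * k / n) ^ (5 * k) := by
          exact mul_le_mul_of_nonneg_right (choose_bd n k hk1) (by positivity)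
      _ = (c * k / n) ^ (4 * k) := key
  · -- littleO part
    set ρ : ℝ := (c / 5) ^ 4 with hρdef
    have hρ0 : 0 < ρ := by positivity
    have hρ1 : ρ < 1 := by
      have : c / 5 < 1 := by
        rw [div_lt_one (by norm_num)]; exact exp_threehalf_lt_five
      exact pow_lt_one₀ (by positivity) this (by norm_num)
    have hsum : Summable (fun j : ℕ => (j:ℝ) ^ 4 * ρ ^ j) :=
      summable_pow_mul_geometric_of_norm_lt_one 4
        (by rw [Real.norm_eq_abs, abs_of_pos hρ0]; exact hρ1)
    set T : ℝ := ∑' j : ℕ, (j:ℝ) ^ 4 * ρ ^ j with hT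
    have hTnn : 0 ≤ T := tsum_nonneg fun j => by positivity
    set C : ℝ := c ^ 4 * ρ⁻¹ * T with hC
    have hCnn : 0 ≤ C := by positivity
    -- main bound: for n ≥ 1, the sum is at most C / n^4
    have main : ∀ n : ℕ, 1 ≤ n →
        ∑ k ∈ Finset.Icc 1 (n / 5), (c * k / n) ^ (4 * k) ≤ C / (n:ℝ) ^ 4 := by
      intro n hn
      have hN : (0:ℝ) < n := by exact_mod_cast hn
      have step : ∀ k ∈ Finset.Icc 1 (n / 5),
          (c * k / n) ^ (4 * k) ≤ (c ^ 4 * ρ⁻¹ / (n:ℝ) ^ 4) * ((k:ℝ) ^ 4 * ρ ^ k) := by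
        intro k hk
        obtain ⟨hk1, hk2⟩ := Finset.mem_Icc.mp hk
        have hK : (0:ℝ) < k := by exact_mod_cast hk1
        have h5k : (5:ℝ) * k ≤ n := by
          have : 5 * k ≤ n := by
            calc 5 * k ≤ 5 * (n / 5) := Nat.mul_le_mul_left 5 hk2
              _ ≤ n := Nat.mul_div_le n 5
          exact_mod_cast this
        have hx : 0 ≤ c * k / n := by positivity
        have hxle : c * k / n ≤ c / 5 := by
          rw [div_le_div_iff₀ hN (by norm_num)]
          nlinarith
        have hx4 : (c * k / n) ^ 4 ≤ ρ := pow_le_pow_left₀ hx hxle 4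
        have hsplit : (c * k / n) ^ (4 * k) = (c * k / n) ^ 4 * ((c * k / n) ^ 4) ^ (k - 1) := by
          rw [← pow_mul, ← pow_add]
          congr 1
          omega
        rw [hsplit]
        have h1 : ((c * k / n) ^ 4) ^ (k - 1) ≤ ρ ^ (k - 1) :=
          pow_le_pow_left₀ (by positivity) hx4 _
        have h2 : ρ ^ (k - 1) = ρ⁻¹ * ρ ^ k := by
          rw [eq_comm, inv_mul_eq_iff_eq_mul₀ hρ0.ne', ← pow_succ']
          congr 1
          omega
        calc (c * k / n) ^ 4 * ((c * k / n) ^ 4) ^ (k - 1)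
            ≤ (c * k / n) ^ 4 * ρ ^ (k - 1) := by
              exact mul_le_mul_of_nonneg_left h1 (by positivity)
          _ = (c ^ 4 * (k:ℝ) ^ 4 / (n:ℝ) ^ 4) * (ρ⁻¹ * ρ ^ k) := by
              rw [h2, div_pow, mul_pow]
          _ = (c ^ 4 * ρ⁻¹ / (n:ℝ) ^ 4) * ((k:ℝ) ^ 4 * ρ ^ k) := by ring
      calc ∑ k ∈ Finset.Icc 1 (n / 5), (c * k / n) ^ (4 * k)
          ≤ ∑ k ∈ Finset.Icc 1 (n / 5), (c ^ 4 * ρ⁻¹ / (n:ℝ) ^ 4) * ((k:ℝ) ^ 4 * ρ ^ k) :=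
            Finset.sum_le_sum step
        _ = (c ^ 4 * ρ⁻¹ / (n:ℝ) ^ 4) * ∑ k ∈ Finset.Icc 1 (n / 5), (k:ℝ) ^ 4 * ρ ^ k := by
            rw [Finset.mul_sum]
        _ ≤ (c ^ 4 * ρ⁻¹ / (n:ℝ) ^ 4) * T := by
            refine mul_le_mul_of_nonneg_left ?_ (by positivity)
            exact Summable.sum_le_tsum _ (fun j _ => by positivity) hsum
        _ = C / (n:ℝ) ^ 4 := by rw [hC]; ring
    rw [isLittleO_iff]
    intro ε hε
    have htend : Tendsto (fun n : ℕ => C / (n:ℝ) ^ 3) atTop (nhds 0) := by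
      apply Tendsto.div_atTop tendsto_const_nhds
      exact (tendsto_pow_atTop (by norm_num : 3 ≠ 0)).comp tendsto_natCast_atTop_atTop
    have hev : ∀ᶠ n : ℕ in atTop, C / (n:ℝ) ^ 3 ≤ ε := by
      filter_upwards [htend.eventually (eventually_le_nhds hε)] with n h using h
    filter_upwards [hev, eventually_ge_atTop 1] with n hn1 hn2
    have hN : (0:ℝ) < n := by exact_mod_cast hn2
    have hSnn : 0 ≤ ∑ k ∈ Finset.Icc 1 (n / 5), (c * k / n) ^ (4 * k) :=
      Finset.sum_nonneg fun k _ => by positivity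
    rw [Real.norm_eq_abs, Real.norm_eq_abs, abs_of_nonneg hSnn,
      abs_of_nonneg (by positivity : (0:ℝ) ≤ 1 / n)]
    calc ∑ k ∈ Finset.Icc 1 (n / 5), (c * k / n) ^ (4 * k)
        ≤ C / (n:ℝ) ^ 4 := main n hn2
      _ = (C / (n:ℝ) ^ 3) * (1 / n) := by
          rw [div_mul_div_comm, mul_one, ← pow_succ]
      _ ≤ ε * (1 / n) := by
          exact mul_le_mul_of_nonneg_right hn1 (by positivity)
end
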